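/- For every even integer N ≥ 2 there exists a binary tree T with N leaves and a placement of colored pebbles on its internal vertices, using 2^s colors where s = ⌊log₄(N/2)⌋, such that: (A) every root-to-leaf path contains exactly one pebble of each color; (B) for every vertex v, the number of pebbles on v is at least the total number of pebbles on its proper ancestors; and each color is used on at most ⌊N/3 + log₂(N)⌋ vertices. -/

import Mathlib

open scoped BigOperators

/-- A (full) binary tree: every internal vertex has exactly two children. -/
inductive BTree : Type
  | leaf : BTree
  | node : BTree → BTree → BTree

namespace BTree

/-- Number of leaves. -/
def numLeaves : BTree → ℕ
  | leaf => 1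
  | node l r => numLeaves l + numLeaves r

/-- The subtree reached from the root by following the path `p`
(`false` = left, `true` = right), if it exists. -/
def subtreeAt : BTree → List Bool → Option BTree
  | t, [] => some t
  | leaf, _ :: _ => none
  | node l r, b :: p => subtreeAt (if b then r else l) p

/-- `p` is (the position of) an internal vertex of `t`. -/
def IsInternalPos (t : BTree) (p : List Bool) : Prop :=
  ∃ l r, subtreeAt t p = some (node l r)

/-- `p` is (the position of) a leaf of `t`. -/
def IsLeafPos (t : BTree) (p : List Bool) : Prop :=
  subtreeAt t p = some leaf

end BTree

/-- The number of pebbles on vertex `v` under the coloring `V`. -/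
def pebbleCount {C : Type*} [Fintype C] (V : C → Finset (List Bool))
    (v : List Bool) : ℕ :=
  (Finset.univ.filter (fun c : C => v ∈ V c)).card

/-- The total number of pebbles on the proper ancestors of `v`. -/
def ancestorPebbles {C : Type*} [Fintype C] (V : C → Finset (List Bool))
    (v : List Bool) : ℕ :=
  ∑ q ∈ (List.inits v).toFinset.erase v, pebbleCount V q

namespace FTC

/-! ### words -/

def words : ℕ → Finset (List Bool)
  | 0 => {[]}
  | n+1 => (words n).image (List.cons false) ∪ (words n).image (List.cons true)

lemma mem_words {n : ℕ} {l : List Bool} : l ∈ words n ↔ l.length = n := by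
  induction n generalizing l with
  | zero => cases l <;> simp [words]
  | succ n ih =>
    cases l with
    | nil => simp [words]
    | cons b t => cases b <;> simp [words, ih]

lemma card_words (n : ℕ) : (words n).card = 2 ^ n := by
  induction n with
  | zero => simp [words]
  | succ n ih =>
    rw [words, Finset.card_union_of_disjoint, Finset.card_image_of_injective _
      (List.cons_injective), Finset.card_image_of_injective _ (List.cons_injective), ih]
    · ring
    · rw [Finset.disjoint_left]
      rintro a ha hb
      simp only [Finset.mem_image] at ha hb
      obtain ⟨x, -, rfl⟩ := ha
      obtain ⟨y, -, h⟩ := hb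
      simp at h

/-! ### arithmetic helpers -/

lemma div_eq_iff_of_pos {m c b : ℕ} (hm : 0 < m) :
    c / m = b ↔ b * m ≤ c ∧ c < (b + 1) * m := by
  constructor
  · rintro rfl
    refine ⟨Nat.div_mul_le_self c m, ?_⟩
    rw [Nat.succ_mul]
    exact Nat.lt_div_mul_add hm
  · rintro ⟨h1, h2⟩
    have hb : b ≤ c / m := (Nat.le_div_iff_mul_le hm).2 h1
    have hb' : c / m < b + 1 := (Nat.div_lt_iff_lt_mul hm).2 h2
    omega

lemma xor_div_pow (x y m : ℕ) : (x ^^^ y) / 2 ^ m = (x / 2 ^ m) ^^^ (y / 2 ^ m) := by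
  simp only [← Nat.shiftRight_eq_div_pow]
  apply Nat.eq_of_testBit_eq
  intro j
  simp [Nat.testBit_shiftRight, Nat.testBit_xor]

lemma xor_eq_one_iff {x t : ℕ} : x ^^^ t = 1 ↔ x = t ^^^ 1 := by
  constructor
  · intro h
    have : x ^^^ t ^^^ t = 1 ^^^ t := by rw [h]
    rwa [Nat.xor_xor_cancel_right, Nat.xor_comm 1 t] at this
  · rintro rfl
    rw [Nat.xor_comm (t ^^^ 1) t, Nat.xor_xor_cancel_left]

/-! ### kfun and counting -/

def kfun (s i a c : ℕ) : ℕ := Nat.size ((c / 2 ^ (s - i)) ^^^ a)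

lemma kfun_le {s i a c : ℕ} (hi : i ≤ s) (ha : a < 2 ^ i) (hc : c < 2 ^ s) :
    kfun s i a c ≤ i := by
  have hq : c / 2 ^ (s - i) < 2 ^ i := by
    rw [Nat.div_lt_iff_lt_mul (Nat.pow_pos (by norm_num))]
    calc c < 2 ^ s := hc
    _ = 2 ^ i * 2 ^ (s - i) := by rw [← pow_add]; congr 1; omega
  rw [kfun, Nat.size_le]
  exact Nat.xor_lt_two_pow hq ha

def cnt (s i k : ℕ) : ℕ := if k = 0 then 2 ^ (s - i) else 2 ^ (s - i + k - 1)

lemma card_kfun {s i a : ℕ} (hi : i ≤ s) (ha : a < 2 ^ i) {k : ℕ} (hk : k ≤ i) :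
    ((Finset.range (2 ^ s)).filter (fun c => kfun s i a c = k)).card = cnt s i k := by
  have hpos : ∀ e : ℕ, (0:ℕ) < 2 ^ e := fun e => Nat.pow_pos (by norm_num)
  cases k with
  | zero =>
    have hset : (Finset.range (2 ^ s)).filter (fun c => kfun s i a c = 0)
        = Finset.Ico (a * 2 ^ (s - i)) ((a + 1) * 2 ^ (s - i)) := by
      ext c
      simp only [Finset.mem_filter, Finset.mem_range, Finset.mem_Ico, kfun,
        Nat.size_eq_zero, Nat.xor_eq_zero_iff]
      rw [div_eq_iff_of_pos (hpos _)]
      constructor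
      · tauto
      · rintro ⟨h1, h2⟩
        refine ⟨lt_of_lt_of_le h2 ?_, h1, h2⟩
        calc (a+1) * 2 ^ (s-i) ≤ 2 ^ i * 2 ^ (s-i) :=
              Nat.mul_le_mul_right _ (by omega)
        _ = 2 ^ s := by rw [← pow_add]; congr 1; omega
    rw [hset, Nat.card_Ico, cnt]
    simp [Nat.succ_mul]
  | succ k' =>
    set E := s - i + k' with hE
    set b := (a / 2 ^ k') ^^^ 1 with hb
    have hk'i : k' < i := by omega
    have hbu : b < 2 ^ (i - k') := by
      apply Nat.xor_lt_two_pow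
      · rw [Nat.div_lt_iff_lt_mul (hpos _), ← pow_add]
        calc a < 2 ^ i := ha
        _ = 2 ^ (i - k' + k') := by congr 1; omega
      · have : (1:ℕ) < 2 ^ 1 := by norm_num
        calc (1:ℕ) < 2 ^ 1 := this
        _ ≤ 2 ^ (i - k') := Nat.pow_le_pow_right (by norm_num) (by omega)
    have hEbound : (b + 1) * 2 ^ E ≤ 2 ^ s := by
      calc (b+1) * 2 ^ E ≤ 2 ^ (i - k') * 2 ^ E := Nat.mul_le_mul_right _ (by omega)
      _ = 2 ^ s := by rw [← pow_add]; congr 1; omega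
    have hset : (Finset.range (2 ^ s)).filter (fun c => kfun s i a c = k' + 1)
        = Finset.Ico (b * 2 ^ E) ((b + 1) * 2 ^ E) := by
      ext c
      simp only [Finset.mem_filter, Finset.mem_range, Finset.mem_Ico]
      have key : kfun s i a c = k' + 1 ↔ c / 2 ^ E = b := by
        rw [kfun]
        set d := (c / 2 ^ (s - i)) ^^^ a with hd
        have h1 : d.size = k' + 1 ↔ (2 ^ k' ≤ d ∧ d < 2 ^ (k' + 1)) := by
          constructor
          · intro h
            constructor
            · exact Nat.lt_size.1 (by omega)
            · exact Nat.size_le.1 (by omega)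
          · rintro ⟨ha1, ha2⟩
            have := Nat.lt_size.2 ha1
            have := Nat.size_le.2 ha2
            omega
        have h2 : (2 ^ k' ≤ d ∧ d < 2 ^ (k' + 1)) ↔ d / 2 ^ k' = 1 := by
          rw [div_eq_iff_of_pos (hpos _)]
          constructor
          · rintro ⟨u1, u2⟩
            refine ⟨by omega, ?_⟩
            calc d < 2 ^ (k' + 1) := u2
            _ = (1+1) * 2 ^ k' := by rw [pow_succ]; ring
          · rintro ⟨u1, u2⟩
            refine ⟨by omega, ?_⟩
            calc d < (1+1) * 2 ^ k' := u2
            _ = 2 ^ (k'+1) := by rw [pow_succ]; ring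
        have h3 : d / 2 ^ k' = (c / 2 ^ E) ^^^ (a / 2 ^ k') := by
          rw [hd, xor_div_pow, Nat.div_div_eq_div_mul, ← pow_add]
        rw [h1, h2, h3, xor_eq_one_iff]
      rw [key, div_eq_iff_of_pos (hpos E)]
      constructor
      · tauto
      · rintro ⟨u1, u2⟩
        exact ⟨lt_of_lt_of_le u2 hEbound, u1, u2⟩
    rw [hset, Nat.card_Ico, cnt]
    have : ¬ (k' + 1 = 0) := by omega
    rw [if_neg this]
    have : s - i + (k' + 1) - 1 = E := by omega
    rw [this]
    simp [Nat.succ_mul]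

lemma sum_cnt {s i : ℕ} {k : ℕ} (hk : 1 ≤ k) :
    ∑ l ∈ Finset.range k, cnt s i l = cnt s i k := by
  induction k with
  | zero => omega
  | succ k ih =>
    rcases Nat.eq_or_lt_of_le hk with h | h
    · simp [← h, cnt]
    · have hk1 : 1 ≤ k := by omega
      rw [Finset.sum_range_succ, ih hk1, cnt, cnt, if_neg (by omega), if_neg (by omega)]
      have h1 : s - i + (k+1) - 1 = (s - i + k - 1) + 1 := by omega
      rw [h1, pow_succ]
      ring

lemma three_mul_sum_size (i : ℕ) :
    3 * ∑ d ∈ Finset.range (2 ^ i), 2 ^ (Nat.size d) = 2 * 4 ^ i + 1 := by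
  induction i with
  | zero => simp
  | succ i ih =>
    have hsplit : ∑ d ∈ Finset.range (2 ^ (i+1)), 2 ^ (Nat.size d)
        = ∑ d ∈ Finset.range (2 ^ i), 2 ^ (Nat.size d)
          + ∑ d ∈ Finset.Ico (2 ^ i) (2 ^ (i+1)), 2 ^ (Nat.size d) := by
      have hle : (2:ℕ) ^ i ≤ 2 ^ (i+1) := Nat.pow_le_pow_right (by norm_num) (by omega)
      have := (Finset.sum_Ico_consecutive (fun d => 2 ^ Nat.size d)
        (Nat.zero_le (2 ^ i)) hle).symm
      simpa [← Finset.range_eq_Ico] using this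
    have hconst : ∑ d ∈ Finset.Ico (2 ^ i) (2 ^ (i+1)), 2 ^ (Nat.size d)
        = 2 ^ i * 2 ^ (i + 1) := by
      rw [Finset.sum_congr rfl (fun d hd => ?_), Finset.sum_const, Nat.card_Ico]
      · have : 2 ^ (i+1) - 2 ^ i = 2 ^ i := by
          have : (2:ℕ) ^ (i+1) = 2 * 2 ^ i := by rw [pow_succ]; ring
          omega
        rw [this, smul_eq_mul]
      · simp only [Finset.mem_Ico] at hd
        have h1 : Nat.size d ≤ i + 1 := Nat.size_le.2 hd.2
        have h2 : i < Nat.size d := Nat.lt_size.2 hd.1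
        congr 1
        omega
    rw [hsplit, Nat.mul_add, ih, hconst]
    have h4 : (2:ℕ) ^ i * 2 ^ (i+1) = 2 * 4 ^ i := by
      have : (4:ℕ) ^ i = 2 ^ i * 2 ^ i := by
        rw [← pow_add]
        have : (4:ℕ) = 2 ^ 2 := by norm_num
        rw [this, ← pow_mul]
        congr 1
        omega
      rw [this, pow_succ]
      ring
    have h5 : (4:ℕ) ^ (i+1) = 4 * 4 ^ i := by rw [pow_succ]; ring
    rw [h4, h5]
    ring

lemma three_mul_sum_kfun {s i c : ℕ} (hi : i ≤ s) (hc : c < 2 ^ s) :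
    3 * ∑ a ∈ Finset.range (2 ^ i), 2 ^ (kfun s i a c) = 2 * 4 ^ i + 1 := by
  have hq : c / 2 ^ (s - i) < 2 ^ i := by
    rw [Nat.div_lt_iff_lt_mul (Nat.pow_pos (by norm_num))]
    calc c < 2 ^ s := hc
    _ = 2 ^ i * 2 ^ (s - i) := by rw [← pow_add]; congr 1; omega
  have hre : ∑ a ∈ Finset.range (2 ^ i), 2 ^ (kfun s i a c)
      = ∑ d ∈ Finset.range (2 ^ i), 2 ^ (Nat.size d) := by
    apply Finset.sum_nbij' (i := fun a => (c / 2 ^ (s-i)) ^^^ a)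
      (j := fun d => (c / 2 ^ (s-i)) ^^^ d)
    · intro a haa
      simp only [Finset.mem_range] at *
      exact Nat.xor_lt_two_pow hq haa
    · intro d hd
      simp only [Finset.mem_range] at *
      exact Nat.xor_lt_two_pow hq hd
    · intro a _
      exact Nat.xor_xor_cancel_left _ _
    · intro d _
      exact Nat.xor_xor_cancel_left _ _
    · intro a _
      rfl
  rw [hre, three_mul_sum_size]

end FTC

namespace FTC

/-! ### complete trees -/

def comp : ℕ → BTree
  | 0 => .leaf
  | n+1 => .node (comp n) (comp n)

lemma subtreeAt_comp {p : List Bool} {n : ℕ} (h : p.length ≤ n) :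
    BTree.subtreeAt (comp n) p = some (comp (n - p.length)) := by
  induction p generalizing n with
  | nil => simp [BTree.subtreeAt]
  | cons b t ih =>
    cases n with
    | zero => simp at h
    | succ n =>
      rw [comp, BTree.subtreeAt]
      have : (if b then comp n else comp n) = comp n := by simp
      have ht : t.length ≤ n := by simp at h; omega
      rw [this, ih ht]
      congr 2
      simp

lemma subtreeAt_comp_none {p : List Bool} {n : ℕ} (h : n < p.length) :
    BTree.subtreeAt (comp n) p = none := by
  induction p generalizing n with
  | nil => simp at h
  | cons b t ih =>
    cases n with
    | zero => rw [comp, BTree.subtreeAt]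
    | succ n =>
      rw [comp, BTree.subtreeAt]
      have : (if b then comp n else comp n) = comp n := by simp
      rw [this]
      exact ih (by simpa using h)

lemma comp_ne_leaf {n : ℕ} (h : 0 < n) : comp n ≠ BTree.leaf := by
  cases n with
  | zero => omega
  | succ n => rw [comp]; exact fun h => by injection h

lemma isLeafPos_comp {p : List Bool} {n : ℕ} :
    (comp n).IsLeafPos p ↔ p.length = n := by
  constructor
  · intro h
    rcases le_or_gt p.length n with hle | hlt
    · rw [BTree.IsLeafPos, subtreeAt_comp hle] at h
      have : comp (n - p.length) = BTree.leaf := by injection h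
      by_contra hne
      exact comp_ne_leaf (by omega) this
    · rw [BTree.IsLeafPos, subtreeAt_comp_none hlt] at h
      injection h
  · rintro rfl
    rw [BTree.IsLeafPos, subtreeAt_comp le_rfl]
    simp [comp]

lemma isInternalPos_comp {p : List Bool} {n : ℕ} :
    (comp n).IsInternalPos p ↔ p.length < n := by
  constructor
  · rintro ⟨l, r, h⟩
    rcases le_or_gt p.length n with hle | hlt
    · rcases Nat.eq_or_lt_of_le hle with he | h2
      · rw [subtreeAt_comp hle, he] at h
        simp [comp] at h
      · exact h2
    · rw [subtreeAt_comp_none hlt] at h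
      injection h
  · intro h
    rw [BTree.IsInternalPos, subtreeAt_comp (le_of_lt h)]
    have : 0 < n - p.length := by omega
    obtain ⟨m, hm⟩ : ∃ m, n - p.length = m + 1 := ⟨n - p.length - 1, by omega⟩
    rw [hm, comp]
    exact ⟨_, _, rfl⟩

/-! ### gadgets and gluing -/

def gpos (s : ℕ) (d : ℕ × ℕ) (c : ℕ) : Finset (List Bool) := words (kfun s d.1 d.2 c)

def Tr : List (ℕ × ℕ) → BTree
  | [] => .leaf
  | [d] => comp (d.1 + 1)
  | d :: d' :: ds => .node (comp (d.1 + 1)) (Tr (d' :: ds))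

def Vl (s : ℕ) : List (ℕ × ℕ) → ℕ → Finset (List Bool)
  | [], _ => ∅
  | [d], c => gpos s d c
  | d :: d' :: ds, c =>
      (gpos s d c).image (List.cons false) ∪ (Vl s (d' :: ds) c).image (List.cons true)

lemma mem_gpos {s : ℕ} {d : ℕ × ℕ} {c : ℕ} {v : List Bool} :
    v ∈ gpos s d c ↔ v.length = kfun s d.1 d.2 c := mem_words

lemma nil_not_mem_Vl_cons {s : ℕ} {d d' : ℕ × ℕ} {ds : List (ℕ × ℕ)} {c : ℕ} :
    ([] : List Bool) ∉ Vl s (d :: d' :: ds) c := by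
  rw [Vl]
  simp

lemma cons_mem_Vl_cons {s : ℕ} {d d' : ℕ × ℕ} {ds : List (ℕ × ℕ)} {c : ℕ} {b : Bool}
    {w : List Bool} :
    (b :: w) ∈ Vl s (d :: d' :: ds) c
      ↔ (b = false ∧ w ∈ gpos s d c) ∨ (b = true ∧ w ∈ Vl s (d' :: ds) c) := by
  rw [Vl]
  cases b <;> simp

end FTC

namespace FTC

def Good (s : ℕ) (D : List (ℕ × ℕ)) : Prop := ∀ d ∈ D, d.1 ≤ s ∧ d.2 < 2 ^ d.1

lemma numLeaves_comp (n : ℕ) : (comp n).numLeaves = 2 ^ n := by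
  induction n with
  | zero => simp [comp, BTree.numLeaves]
  | succ n ih => rw [comp, BTree.numLeaves, ih, pow_succ]; ring

lemma numLeaves_Tr {D : List (ℕ × ℕ)} (hD : D ≠ []) :
    (Tr D).numLeaves = (D.map (fun d => 2 ^ (d.1 + 1))).sum := by
  induction D with
  | nil => simp at hD
  | cons d ds ih =>
    cases ds with
    | nil => simp [Tr, numLeaves_comp]
    | cons d' ds' =>
      rw [Tr, BTree.numLeaves, numLeaves_comp, ih (by simp)]
      simp

lemma subtreeAt_node_cons (A B : BTree) (b : Bool) (p : List Bool) :
    (BTree.node A B).subtreeAt (b :: p) = (if b then B else A).subtreeAt p := rfl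

lemma internal_Vl {s : ℕ} {D : List (ℕ × ℕ)} (hg : Good s D) {c : ℕ} (hc : c < 2 ^ s)
    {v : List Bool} (hv : v ∈ Vl s D c) : (Tr D).IsInternalPos v := by
  induction D generalizing v with
  | nil => simp [Vl] at hv
  | cons d ds ih =>
    have hd := hg d (by simp)
    cases ds with
    | nil =>
      rw [Vl] at hv
      rw [Tr, isInternalPos_comp]
      rw [mem_gpos] at hv
      have := kfun_le hd.1 hd.2 hc
      omega
    | cons d' ds' =>
      cases v with
      | nil => exact absurd hv nil_not_mem_Vl_cons
      | cons b w =>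
        rcases cons_mem_Vl_cons.1 hv with ⟨rfl, hw⟩ | ⟨rfl, hw⟩
        · have : (comp (d.1 + 1)).IsInternalPos w := by
            rw [isInternalPos_comp]
            rw [mem_gpos] at hw
            have := kfun_le hd.1 hd.2 hc
            omega
          obtain ⟨l, r, hlr⟩ := this
          exact ⟨l, r, by rw [Tr, subtreeAt_node_cons]; simpa using hlr⟩
        · have : (Tr (d' :: ds')).IsInternalPos w :=
            ih (fun x hx => hg x (by simp [hx])) hw
          obtain ⟨l, r, hlr⟩ := this
          exact ⟨l, r, by rw [Tr, subtreeAt_node_cons]; simpa using hlr⟩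

lemma gadget_A {s i a c : ℕ} (hi : i ≤ s) (ha : a < 2 ^ i) (hc : c < 2 ^ s)
    {p : List Bool} (hp : p.length = i + 1) :
    ∃! q : List Bool, q ∈ gpos s (i, a) c ∧ q <+: p := by
  have hk : kfun s i a c ≤ i := kfun_le hi ha hc
  refine ⟨p.take (kfun s i a c), ⟨mem_gpos.2 (by simp; omega), List.take_prefix _ _⟩, ?_⟩
  rintro q ⟨hq1, hq2⟩
  rw [List.prefix_iff_eq_take] at hq2
  rw [hq2, mem_gpos.1 hq1]

lemma A_Tr {s : ℕ} {D : List (ℕ × ℕ)} (hD : D ≠ []) (hg : Good s D) {c : ℕ}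
    (hc : c < 2 ^ s) {p : List Bool} (hp : (Tr D).IsLeafPos p) :
    ∃! q : List Bool, q ∈ Vl s D c ∧ q <+: p := by
  induction D generalizing p with
  | nil => simp at hD
  | cons d ds ih =>
    have hd := hg d (by simp)
    cases ds with
    | nil =>
      rw [Tr, isLeafPos_comp] at hp
      exact gadget_A hd.1 hd.2 hc hp
    | cons d' ds' =>
      cases p with
      | nil =>
        rw [BTree.IsLeafPos, Tr, BTree.subtreeAt] at hp
        injection hp with h
        injection h
      | cons b p' =>
        rw [BTree.IsLeafPos, Tr, subtreeAt_node_cons] at hp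
        cases b with
        | false =>
          simp only [if_neg Bool.false_ne_true] at hp
          have hp' : p'.length = d.1 + 1 := isLeafPos_comp.1 hp
          obtain ⟨q0, hq0, huniq⟩ := gadget_A hd.1 hd.2 hc hp'
          refine ⟨false :: q0, ⟨cons_mem_Vl_cons.2 (Or.inl ⟨rfl, hq0.1⟩),
            List.cons_prefix_cons.2 ⟨rfl, hq0.2⟩⟩, ?_⟩
          rintro q ⟨hq1, hq2⟩
          cases q with
          | nil => exact absurd hq1 nil_not_mem_Vl_cons
          | cons b' w =>
            obtain ⟨hb, hw⟩ := List.cons_prefix_cons.1 hq2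
            subst hb
            rcases cons_mem_Vl_cons.1 hq1 with ⟨_, hmem⟩ | ⟨h', _⟩
            · rw [huniq w ⟨hmem, hw⟩]
            · simp at h'
        | true =>
          simp only [if_pos rfl] at hp
          obtain ⟨q0, hq0, huniq⟩ := ih (by simp) (fun x hx => hg x (by simp [hx])) hp
          refine ⟨true :: q0, ⟨cons_mem_Vl_cons.2 (Or.inr ⟨rfl, hq0.1⟩),
            List.cons_prefix_cons.2 ⟨rfl, hq0.2⟩⟩, ?_⟩
          rintro q ⟨hq1, hq2⟩
          cases q with
          | nil => exact absurd hq1 nil_not_mem_Vl_cons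
          | cons b' w =>
            obtain ⟨hb, hw⟩ := List.cons_prefix_cons.1 hq2
            subst hb
            rcases cons_mem_Vl_cons.1 hq1 with ⟨h', _⟩ | ⟨_, hmem⟩
            · simp at h'
            · rw [huniq w ⟨hmem, hw⟩]

/-! ### pebble counting transfer -/

lemma pebbleCount_eq_range (M : ℕ) (W : ℕ → Finset (List Bool)) (v : List Bool) :
    pebbleCount (fun c : Fin M => W c.val) v
      = ((Finset.range M).filter (fun c => v ∈ W c)).card := by
  rw [pebbleCount, Finset.card_filter, Finset.card_filter]
  exact Fin.sum_univ_eq_sum_range (fun c => if v ∈ W c then 1 else 0) M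

lemma pc_gpos {s i a : ℕ} (hi : i ≤ s) (ha : a < 2 ^ i) {w : List Bool}
    (hw : w.length ≤ i) :
    pebbleCount (fun c : Fin (2 ^ s) => gpos s (i, a) c.val) w = cnt s i w.length := by
  rw [pebbleCount_eq_range]
  have : (Finset.range (2 ^ s)).filter (fun c => w ∈ gpos s (i, a) c)
      = (Finset.range (2 ^ s)).filter (fun c => kfun s i a c = w.length) := by
    ext c
    simp [mem_gpos, eq_comm]
  rw [this, card_kfun hi ha hw]

lemma anc_eq {C : Type*} [Fintype C] (V : C → Finset (List Bool)) (v : List Bool) :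
    ancestorPebbles V v = ∑ l ∈ Finset.range v.length, pebbleCount V (v.take l) := by
  rw [ancestorPebbles]
  have hset : (List.inits v).toFinset.erase v
      = (Finset.range v.length).image (fun l => v.take l) := by
    ext q
    simp only [Finset.mem_erase, List.mem_toFinset, List.mem_inits, Finset.mem_image,
      Finset.mem_range]
    constructor
    · rintro ⟨hne, hpre⟩
      have hlen : q.length ≤ v.length := hpre.length_le
      have heq : q = v.take q.length := List.prefix_iff_eq_take.1 hpre
      refine ⟨q.length, ?_, heq.symm⟩
      rcases Nat.eq_or_lt_of_le hlen with h | h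
      · exfalso; apply hne; rw [heq, h, List.take_length]
      · exact h
    · rintro ⟨l, hl, rfl⟩
      refine ⟨?_, List.take_prefix _ _⟩
      intro h
      have : (v.take l).length = l := by simp; omega
      rw [h] at this
      omega
  rw [hset, Finset.sum_image]
  intro x hx y hy hxy
  have hx' : (v.take x).length = x := by simp at hx ⊢; omega
  have hy' : (v.take y).length = y := by simp at hy ⊢; omega
  rw [← hx', ← hy', show v.take x = v.take y from hxy]

lemma anc_cons {C : Type*} [Fintype C] (V : C → Finset (List Bool)) (x : Bool)
    (w : List Bool) :
    ancestorPebbles V (x :: w)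
      = pebbleCount V [] + ∑ l ∈ Finset.range w.length, pebbleCount V (x :: w.take l) := by
  rw [anc_eq]
  simp only [List.length_cons]
  rw [Finset.sum_range_succ']
  simp only [List.take_succ_cons, List.take_zero]
  ring

lemma B_gadget_sum {s i : ℕ} {k : ℕ} : ∑ l ∈ Finset.range k, cnt s i l ≤ cnt s i k := by
  cases k with
  | zero => simp
  | succ k => rw [sum_cnt (by omega)]

lemma B_Tr {s : ℕ} {D : List (ℕ × ℕ)} (hg : Good s D) {v : List Bool}
    (hv : (Tr D).IsInternalPos v) :
    ancestorPebbles (fun c : Fin (2 ^ s) => Vl s D c.val) v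
      ≤ pebbleCount (fun c : Fin (2 ^ s) => Vl s D c.val) v := by
  induction D generalizing v with
  | nil =>
    rw [Tr] at hv
    obtain ⟨l, r, hlr⟩ := hv
    cases v with
    | nil => rw [BTree.subtreeAt] at hlr; injection hlr with h; injection h
    | cons b w => rw [BTree.subtreeAt] at hlr; injection hlr
  | cons d ds ih =>
    have hd := hg d (by simp)
    cases ds with
    | nil =>
      rw [Tr, isInternalPos_comp] at hv
      have hvi : v.length ≤ d.1 := by omega
      have hVl : (fun c : Fin (2 ^ s) => Vl s [d] c.val)
          = (fun c : Fin (2 ^ s) => gpos s (d.1, d.2) c.val) := by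
        funext c
        rw [Vl]
      rw [anc_eq]
      calc ∑ l ∈ Finset.range v.length,
            pebbleCount (fun c : Fin (2 ^ s) => Vl s [d] c.val) (v.take l)
          = ∑ l ∈ Finset.range v.length, cnt s d.1 l := by
            apply Finset.sum_congr rfl
            intro l hl
            simp only [Finset.mem_range] at hl
            rw [hVl, pc_gpos hd.1 hd.2 (by simp; omega)]
            congr 1
            simp
            omega
        _ ≤ cnt s d.1 v.length := B_gadget_sum
        _ = pebbleCount (fun c : Fin (2 ^ s) => Vl s [d] c.val) v := by
            rw [hVl, pc_gpos hd.1 hd.2 hvi]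
    | cons d' ds' =>
      have pc_nil : pebbleCount (fun c : Fin (2 ^ s) => Vl s (d :: d' :: ds') c.val) [] = 0 := by
        rw [pebbleCount_eq_range]
        rw [Finset.card_eq_zero, Finset.filter_eq_empty_iff]
        intro c _
        exact nil_not_mem_Vl_cons
      have pc_false : ∀ w : List Bool,
          pebbleCount (fun c : Fin (2 ^ s) => Vl s (d :: d' :: ds') c.val) (false :: w)
            = pebbleCount (fun c : Fin (2 ^ s) => gpos s (d.1, d.2) c.val) w := by
        intro w
        rw [pebbleCount_eq_range, pebbleCount_eq_range]
        congr 1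
        ext c
        simp only [Finset.mem_filter, Finset.mem_range, cons_mem_Vl_cons]
        tauto
      have pc_true : ∀ w : List Bool,
          pebbleCount (fun c : Fin (2 ^ s) => Vl s (d :: d' :: ds') c.val) (true :: w)
            = pebbleCount (fun c : Fin (2 ^ s) => Vl s (d' :: ds') c.val) w := by
        intro w
        rw [pebbleCount_eq_range, pebbleCount_eq_range]
        congr 1
        ext c
        simp only [Finset.mem_filter, Finset.mem_range, cons_mem_Vl_cons]
        tauto
      cases v with
      | nil => rw [anc_eq]; simp
      | cons b w =>
        obtain ⟨l, r, hlr⟩ := hv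
        rw [Tr, subtreeAt_node_cons] at hlr
        cases b with
        | false =>
          simp only [if_neg Bool.false_ne_true] at hlr
          have hwin : (comp (d.1 + 1)).IsInternalPos w := ⟨l, r, hlr⟩
          rw [isInternalPos_comp] at hwin
          have hwi : w.length ≤ d.1 := by omega
          rw [anc_cons, pc_nil, zero_add, pc_false]
          calc ∑ l ∈ Finset.range w.length,
                pebbleCount (fun c : Fin (2 ^ s) => Vl s (d :: d' :: ds') c.val)
                  (false :: w.take l)
              = ∑ l ∈ Finset.range w.length, cnt s d.1 l := by
                apply Finset.sum_congr rfl
                intro l hl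
                simp only [Finset.mem_range] at hl
                rw [pc_false, pc_gpos hd.1 hd.2 (by simp; omega)]
                congr 1
                simp
                omega
            _ ≤ cnt s d.1 w.length := B_gadget_sum
            _ = pebbleCount (fun c : Fin (2 ^ s) => gpos s (d.1, d.2) c.val) w := by
                rw [pc_gpos hd.1 hd.2 hwi]
        | true =>
          simp only [if_pos rfl] at hlr
          have hwin : (Tr (d' :: ds')).IsInternalPos w := ⟨l, r, hlr⟩
          rw [anc_cons, pc_nil, zero_add, pc_true]
          calc ∑ l ∈ Finset.range w.length,
                pebbleCount (fun c : Fin (2 ^ s) => Vl s (d :: d' :: ds') c.val)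
                  (true :: w.take l)
              = ∑ l ∈ Finset.range w.length,
                pebbleCount (fun c : Fin (2 ^ s) => Vl s (d' :: ds') c.val) (w.take l) := by
                exact Finset.sum_congr rfl (fun l _ => pc_true _)
            _ = ancestorPebbles (fun c : Fin (2 ^ s) => Vl s (d' :: ds') c.val) w := by
                rw [anc_eq]
            _ ≤ pebbleCount (fun c : Fin (2 ^ s) => Vl s (d' :: ds') c.val) w :=
                ih (fun x hx => hg x (by simp [hx])) hwin

lemma card_Vl {s : ℕ} {D : List (ℕ × ℕ)} {c : ℕ} :
    (Vl s D c).card = (D.map (fun d => 2 ^ (kfun s d.1 d.2 c))).sum := by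
  induction D with
  | nil => simp [Vl]
  | cons d ds ih =>
    cases ds with
    | nil => simp [Vl, gpos, card_words]
    | cons d' ds' =>
      rw [Vl, Finset.card_union_of_disjoint, Finset.card_image_of_injective _
        List.cons_injective, Finset.card_image_of_injective _ List.cons_injective,
        ih, gpos, card_words]
      · simp
      · rw [Finset.disjoint_left]
        rintro x hx hy
        simp only [Finset.mem_image] at hx hy
        obtain ⟨u, -, rfl⟩ := hx
        obtain ⟨u', -, h⟩ := hy
        simp at h

end FTC

namespace FTC

/-! ### building the descriptor list from base-4 digits -/

def blockL (i : ℕ) : List (ℕ × ℕ) := (List.range (2 ^ i)).map (fun a => (i, a))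

def build : ℕ → List ℕ → List (ℕ × ℕ)
  | _, [] => []
  | i, β :: t => (List.replicate β (blockL i)).flatten ++ build (i + 1) t

lemma good_build {s : ℕ} : ∀ {i : ℕ} {L : List ℕ}, i + L.length ≤ s + 1 →
    Good s (build i L) := by
  intro i L
  induction L generalizing i with
  | nil => intro _ d hd; simp [build] at hd
  | cons β t ih =>
    intro hlen d hd
    rw [build, List.mem_append] at hd
    rcases hd with hd | hd
    · rw [List.mem_flatten] at hd
      obtain ⟨l, hl, hdl⟩ := hd
      rw [List.mem_replicate] at hl
      rw [hl.2, blockL, List.mem_map] at hdl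
      obtain ⟨a, ha, rfl⟩ := hdl
      simp only [List.mem_range] at ha
      simp only [List.length_cons] at hlen
      exact ⟨by omega, ha⟩
    · exact ih (by simp at hlen ⊢; omega) d hd

lemma sum_map_range {M : Type*} [AddCommMonoid M] (f : ℕ → M) (n : ℕ) :
    ((List.range n).map f).sum = ∑ a ∈ Finset.range n, f a := by
  induction n with
  | zero => simp
  | succ n ih => rw [List.range_succ, List.map_append, List.sum_append,
      Finset.sum_range_succ, ih]; simp

lemma sum_map_flatten_replicate (β : ℕ) (l : List (ℕ × ℕ)) (f : ℕ × ℕ → ℕ) :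
    (((List.replicate β l).flatten).map f).sum = β * ((l.map f).sum) := by
  induction β with
  | zero => simp
  | succ β ih =>
    rw [List.replicate_succ, List.flatten_cons, List.map_append, List.sum_append, ih,
      Nat.succ_mul]
    ring

lemma leaves_build : ∀ (L : List ℕ) (i : ℕ),
    ((build i L).map (fun d => 2 ^ (d.1 + 1))).sum = 2 * 4 ^ i * Nat.ofDigits 4 L := by
  intro L
  induction L with
  | nil => intro i; simp [build, Nat.ofDigits]
  | cons β t ih =>
    intro i
    rw [build, List.map_append, List.sum_append, sum_map_flatten_replicate, ih,
      Nat.ofDigits_cons]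
    have hblock : ((blockL i).map (fun d => 2 ^ (d.1 + 1))).sum = 2 ^ i * 2 ^ (i + 1) := by
      rw [blockL, List.map_map, sum_map_range]
      simp [Finset.sum_const]
    rw [hblock]
    have h1 : (2:ℕ) ^ i * 2 ^ (i+1) = 2 * 4 ^ i := by
      have h2 : (4:ℕ) ^ i = 2 ^ i * 2 ^ i := by
        rw [← pow_add]
        have : (4:ℕ) = 2 ^ 2 := by norm_num
        rw [this, ← pow_mul]
        congr 1
        omega
      rw [h2, pow_succ]
      ring
    have h3 : (4:ℕ) ^ (i+1) = 4 * 4 ^ i := by rw [pow_succ]; ring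
    rw [h1, h3]
    ring

lemma usage_build {s c : ℕ} (hc : c < 2 ^ s) : ∀ (L : List ℕ) (i : ℕ),
    i + L.length ≤ s + 1 →
    3 * ((build i L).map (fun d => 2 ^ (kfun s d.1 d.2 c))).sum
      = 2 * 4 ^ i * Nat.ofDigits 4 L + L.sum := by
  intro L
  induction L with
  | nil => intro i _; simp [build, Nat.ofDigits]
  | cons β t ih =>
    intro i hlen
    have hi : i ≤ s := by simp at hlen; omega
    rw [build, List.map_append, List.sum_append, sum_map_flatten_replicate,
      Nat.ofDigits_cons, List.sum_cons]
    have hblock : ((blockL i).map (fun d => 2 ^ (kfun s d.1 d.2 c))).sum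
        = ∑ a ∈ Finset.range (2 ^ i), 2 ^ (kfun s i a c) := by
      rw [blockL, List.map_map, sum_map_range]
      rfl
    have hkey := three_mul_sum_kfun hi hc
    have hrec := ih (i + 1) (by simp at hlen ⊢; omega)
    have h3 : (4:ℕ) ^ (i+1) = 4 * 4 ^ i := by rw [pow_succ]; ring
    rw [Nat.mul_add, Nat.mul_add, hblock]
    rw [Nat.mul_left_comm 3 β _, hkey, hrec, h3]
    ring

end FTC

/-- For every even `N ≥ 2` there is a binary tree with `N` leaves and a pebbling with
`2^s` colors, `s = ⌊log₄(N/2)⌋`, such that (A) every root-to-leaf path carries exactly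
one pebble of each color, (B) every vertex carries at least as many pebbles as all of
its proper ancestors together, and every color is used on at most `⌊N/3 + log₂ N⌋`
vertices. -/
theorem exists_fair_tight_covering (N : ℕ) (hN : 2 ≤ N) (hNe : Even N) :
    ∃ (t : BTree)
      (V : Fin (2 ^ Nat.floor (Real.logb 4 ((N : ℝ) / 2))) → Finset (List Bool)),
      t.numLeaves = N ∧
      (∀ c, ∀ v ∈ V c, t.IsInternalPos v) ∧
      (∀ c, ∀ p : List Bool, t.IsLeafPos p →
        ∃! q : List Bool, q ∈ V c ∧ q <+: p) ∧
      (∀ v : List Bool, t.IsInternalPos v →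
        ancestorPebbles V v ≤ pebbleCount V v) ∧
      (∀ c, (V c).card ≤ Nat.floor ((N : ℝ) / 3 + Real.logb 2 N)) := by
  classical
  obtain ⟨n, hm⟩ := hNe
  have hN2 : N = 2 * n := by omega
  have hn1 : 1 ≤ n := by omega
  set s := Nat.floor (Real.logb 4 ((N : ℝ) / 2)) with hs
  have hcast : ((N : ℝ) / 2) = (n : ℝ) := by
    rw [hN2]; push_cast; ring
  have hnpos : (0 : ℝ) < (n : ℝ) := by exact_mod_cast hn1
  -- 4 ^ s ≤ n
  have h4s : 4 ^ s ≤ n := by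
    have hlognn : (0 : ℝ) ≤ Real.logb 4 ((N : ℝ) / 2) := by
      rw [hcast]
      exact Real.logb_nonneg (by norm_num) (by exact_mod_cast hn1)
    have h1 : (s : ℝ) ≤ Real.logb 4 ((N : ℝ) / 2) := Nat.floor_le hlognn
    have h2 : (4 : ℝ) ^ (s : ℝ) ≤ (4 : ℝ) ^ Real.logb 4 ((N : ℝ) / 2) :=
      Real.rpow_le_rpow_of_exponent_le (by norm_num) h1
    rw [Real.rpow_logb (by norm_num) (by norm_num) (by rw [hcast]; exact hnpos),
      Real.rpow_natCast, hcast] at h2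
    exact_mod_cast h2
  -- n < 4 ^ (s + 1)
  have h4s' : n < 4 ^ (s + 1) := by
    have h1 : Real.logb 4 ((N : ℝ) / 2) < (s : ℝ) + 1 := Nat.lt_floor_add_one _
    have h2 : (4 : ℝ) ^ Real.logb 4 ((N : ℝ) / 2) < (4 : ℝ) ^ ((s : ℝ) + 1) :=
      Real.rpow_lt_rpow_of_exponent_lt (by norm_num) h1
    rw [Real.rpow_logb (by norm_num) (by norm_num) (by rw [hcast]; exact hnpos), hcast] at h2
    have h3 : ((s : ℝ) + 1) = ((s + 1 : ℕ) : ℝ) := by push_cast; ring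
    rw [h3, Real.rpow_natCast] at h2
    exact_mod_cast h2
  set L := Nat.digits 4 n with hL
  have hofd : Nat.ofDigits 4 L = n := Nat.ofDigits_digits 4 n
  have hlen : L.length ≤ s + 1 := by
    have h1 : 4 ^ L.length ≤ 4 * n :=
      Nat.base_pow_length_digits_le 4 n (by norm_num) (by omega)
    have h2 : 4 * n < 4 ^ (s + 2) := by
      calc 4 * n < 4 * 4 ^ (s + 1) := by omega
      _ = 4 ^ (s + 2) := by rw [pow_succ]; ring
    have h3 : (4:ℕ) ^ L.length < 4 ^ (s + 2) := by omega
    have := (Nat.pow_lt_pow_iff_right (a := 4) (by norm_num)).1 h3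
    omega
  set D := FTC.build 0 L with hD
  have hgood : FTC.Good s D := FTC.good_build (by simpa using hlen)
  have hleaves : ((D.map (fun d => 2 ^ (d.1 + 1))).sum) = N := by
    rw [hD, FTC.leaves_build, hofd]
    simp [hN2]
  have hDne : D ≠ [] := by
    intro h
    rw [h] at hleaves
    simp at hleaves
    omega
  refine ⟨FTC.Tr D, fun c => FTC.Vl s D c.val, ?_, ?_, ?_, ?_, ?_⟩
  · rw [FTC.numLeaves_Tr hDne, hleaves]
  · intro c v hv
    exact FTC.internal_Vl hgood c.isLt hv
  · intro c p hp
    exact FTC.A_Tr hDne hgood c.isLt hp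
  · intro v hv
    exact FTC.B_Tr hgood hv
  · intro c
    have husage : 3 * (FTC.Vl s D c.val).card = 2 * n + L.sum := by
      rw [FTC.card_Vl, hD, FTC.usage_build c.isLt L 0 (by simpa using hlen), hofd]
      ring
    have hdig : ∀ x ∈ L, x ≤ 3 := by
      intro x hx
      have := Nat.digits_lt_base (by norm_num) hx
      omega
    have hLsum : L.sum ≤ 3 * (s + 1) := by
      calc L.sum ≤ L.length • 3 := List.sum_le_card_nsmul L 3 hdig
      _ = 3 * L.length := by rw [smul_eq_mul]; ring
      _ ≤ 3 * (s + 1) := by omega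
    have hu : 3 * (FTC.Vl s D c.val).card ≤ N + 3 * (s + 1) := by omega
    -- real bound
    have hlog2 : (s : ℝ) + 1 ≤ Real.logb 2 N := by
      rw [Real.le_logb_iff_rpow_le (by norm_num) (by positivity)]
      have h1 : ((s : ℝ) + 1) = ((s + 1 : ℕ) : ℝ) := by push_cast; ring
      rw [h1, Real.rpow_natCast]
      have h2 : (2:ℕ) ^ (s + 1) ≤ N := by
        calc (2:ℕ) ^ (s + 1) = 2 * 2 ^ s := by rw [pow_succ]; ring
        _ ≤ 2 * 4 ^ s := by
            have : (2:ℕ) ^ s ≤ 4 ^ s := Nat.pow_le_pow_left (by norm_num) s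
            omega
        _ ≤ 2 * n := by omega
        _ = N := hN2.symm
      exact_mod_cast h2
    apply Nat.le_floor
    have hcast2 : ((3 * (FTC.Vl s D c.val).card : ℕ) : ℝ) ≤ ((N + 3 * (s + 1) : ℕ) : ℝ) := by
      exact_mod_cast hu
    push_cast at hcast2
    have : ((FTC.Vl s D c.val).card : ℝ) ≤ (N : ℝ) / 3 + ((s : ℝ) + 1) := by linarith
    calc ((FTC.Vl s D c.val).card : ℝ) ≤ (N : ℝ) / 3 + ((s : ℝ) + 1) := this
    _ ≤ (N : ℝ) / 3 + Real.logb 2 N := by linarith
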